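/- Let N, Δ ∈ ℕ, w : Fin N → ℝ, b ∈ ℝ, w̄ : Fin N → ℤ and b̄ ∈ ℤ. Suppose that for every integer vector x' : Fin (N+1) → ℤ with ∑_{i} |x' i| ≤ N·Δ + 1, the sign of ∑_{i<N} w i · x' i + b · x' N equals the sign of ∑_{i<N} (w̄ i : ℝ) · x' i + (b̄ : ℝ) · x' N. Then for every integer vector x : Fin N → ℤ with |x i| ≤ Δ for all i, one has ∑_i w i · (x i : ℝ) ≤ b if and only if ∑_i (w̄ i) · (x i) ≤ b̄ (an inequality of integers). -/
import Mathlib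

lemma sign_le_zero_iff_aux {r s : ℝ} (h : Real.sign r = Real.sign s) :
    r ≤ 0 ↔ s ≤ 0 := by
  rcases lt_trichotomy r 0 with hr | hr | hr <;>
  rcases lt_trichotomy s 0 with hs | hs | hs <;>
  simp_all [Real.sign_of_pos, Real.sign_of_neg, Real.sign_zero] <;> first | linarith | (constructor <;> intro <;> linarith)

theorem frank_tardos_inequality_preservation (N Δ : ℕ) (w : Fin N → ℝ) (b : ℝ)
    (wbar : Fin N → ℤ) (bbar : ℤ)
    (hsign : ∀ x' : Fin (N + 1) → ℤ,
      (∑ i, |x' i|) ≤ (N : ℤ) * (Δ : ℤ) + 1 →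
      Real.sign ((∑ i : Fin N, w i * (x' i.castSucc : ℝ)) + b * (x' (Fin.last N) : ℝ)) =
        Real.sign ((∑ i : Fin N, (wbar i : ℝ) * (x' i.castSucc : ℝ)) +
          (bbar : ℝ) * (x' (Fin.last N) : ℝ)))
    (x : Fin N → ℤ) (hx : ∀ i, |x i| ≤ (Δ : ℤ)) :
    (∑ i, w i * (x i : ℝ)) ≤ b ↔ (∑ i, wbar i * x i) ≤ bbar := by
  set x' : Fin (N + 1) → ℤ := Fin.snoc x (-1) with hx'
  have hbound : (∑ i, |x' i|) ≤ (N : ℤ) * (Δ : ℤ) + 1 := by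
    rw [Fin.sum_univ_castSucc]
    simp only [hx', Fin.snoc_castSucc, Fin.snoc_last]
    have : (∑ i : Fin N, |x i|) ≤ (N : ℤ) * (Δ : ℤ) := by
      calc (∑ i : Fin N, |x i|) ≤ ∑ _i : Fin N, (Δ : ℤ) :=
            Finset.sum_le_sum fun i _ => hx i
        _ = (N : ℤ) * (Δ : ℤ) := by simp [mul_comm]
    simpa using this
  have h := hsign x' hbound
  simp only [hx', Fin.snoc_castSucc, Fin.snoc_last] at h
  push_cast at h
  have h2 := sign_le_zero_iff_aux h
  constructor
  · intro hle
    have : ((∑ i, wbar i * x i : ℤ) : ℝ) ≤ (bbar : ℝ) := by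
      have := h2.mp (by linarith)
      push_cast at this ⊢
      linarith
    exact_mod_cast this
  · intro hle
    have : ((∑ i, wbar i * x i : ℤ) : ℝ) ≤ (bbar : ℝ) := by exact_mod_cast hle
    push_cast at this
    have := h2.mpr (by linarith)
    linarith
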